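/- Let G = (V,E) with V = {1,...,n}, N_m = {1,...,m}, and G*(N_m) defined as the graph on N_m with edge {u,v} iff there is a path in G between u and v whose intermediate vertices lie in V − N_m. Fix 2 ≤ m ≤ n and U ⊆ N_{m−1} such that G*(N_{m−1}) \ U is connected. Then at least one of G*(N_m) \ U and G*(N_m) \ (U ∪ {m}) is connected. -/

import Mathlib

/-- The graph `G*(S)` on vertex subset `S`: distinct `u, v ∈ S` are adjacent iff
there is a path (walk) between `u` and `v` in `G` all of whose intermediate
vertices lie outside `S`. Vertices outside `S` are isolated. -/
def GStar {V : Type} (G : SimpleGraph V) (S : Set V) : SimpleGraph V where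
  Adj u v := u ≠ v ∧ u ∈ S ∧ v ∈ S ∧
    ∃ p : G.Walk u v, ∀ x ∈ p.support, x ≠ u → x ≠ v → x ∉ S
  symm := by
    refine ⟨?_⟩
    rintro u v ⟨hne, hu, hv, p, hp⟩
    refine ⟨hne.symm, hv, hu, p.reverse, ?_⟩
    intro x hx hxv hxu
    exact hp x (by simpa [SimpleGraph.Walk.support_reverse] using hx) hxu hxv
  loopless := ⟨fun u h => h.1 rfl⟩

/-- `a` and `b` are joined by a walk in `G` whose vertices all lie in `A`
(i.e. they are in the same component of the induced subgraph on `A`). -/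
def ReachIn {V : Type} (G : SimpleGraph V) (A : Set V) (a b : V) : Prop :=
  ∃ p : G.Walk a b, ∀ x ∈ p.support, x ∈ A

/-- The vertex set `A` is connected in `H` (restricted to `A`). -/
def ConnOn {V : Type} (H : SimpleGraph V) (A : Set V) : Prop :=
  A.Nonempty ∧ ∀ a ∈ A, ∀ b ∈ A, ReachIn H A a b

/-- The vertex set `A` is disconnected in `H` (restricted to `A`). -/
def DiscOn {V : Type} (H : SimpleGraph V) (A : Set V) : Prop :=
  ∃ a ∈ A, ∃ b ∈ A, ¬ ReachIn H A a b

namespace Stmt18Aux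
open SimpleGraph

variable {V : Type} {H : SimpleGraph V} {A B : Set V} {a b c : V}

lemma reachIn_mono (h : A ⊆ B) (r : ReachIn H A a b) : ReachIn H B a b := by
  obtain ⟨p, hp⟩ := r; exact ⟨p, fun x hx => h (hp x hx)⟩

lemma reachIn_refl (ha : a ∈ A) : ReachIn H A a a :=
  ⟨Walk.nil, by simp [ha]⟩

lemma reachIn_symm (r : ReachIn H A a b) : ReachIn H A b a := by
  obtain ⟨p, hp⟩ := r
  exact ⟨p.reverse, fun x hx => hp x (by simpa [Walk.support_reverse] using hx)⟩

lemma reachIn_trans (r : ReachIn H A a b) (r' : ReachIn H A b c) : ReachIn H A a c := by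
  obtain ⟨p, hp⟩ := r; obtain ⟨q, hq⟩ := r'
  refine ⟨p.append q, fun x hx => ?_⟩
  rcases (Walk.mem_support_append_iff _ _).1 hx with h | h
  · exact hp x h
  · exact hq x h

lemma adj_reachIn (h : H.Adj a b) (ha : a ∈ A) (hb : b ∈ A) : ReachIn H A a b :=
  ⟨Walk.cons h Walk.nil, by simp [ha, hb]⟩

/-- Edge splitting lemma. -/
lemma edge_split {G : SimpleGraph V} {S' S : Set V} {w : V}
    (hw : w ∉ S') (hS : ∀ x, x ∈ S ↔ x ∈ S' ∨ x = w) {u v : V}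
    (h : (GStar G S').Adj u v) :
    (GStar G S).Adj u v ∨ ((GStar G S).Adj u w ∧ (GStar G S).Adj w v) := by
  classical
  obtain ⟨hne, hu, hv, p0, hp0⟩ := h
  have hu' : u ∈ S := (hS u).2 (Or.inl hu)
  have hv' : v ∈ S := (hS v).2 (Or.inl hv)
  have hw' : w ∈ S := (hS w).2 (Or.inr rfl)
  set p : G.Walk u v := p0.bypass with hpdef
  have hpath : p.IsPath := p0.bypass_isPath
  have hsup : ∀ x ∈ p.support, x ≠ u → x ≠ v → x ∉ S' := fun x hx =>
    hp0 x (p0.support_bypass_subset hx)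
  by_cases hwp : w ∈ p.support
  · have hwu : w ≠ u := fun h => hw (h ▸ hu)
    have hwv : w ≠ v := fun h => hw (h ▸ hv)
    right
    have hspec := p.take_spec hwp
    have hps : p.support = (p.takeUntil w hwp).support ++ (p.dropUntil w hwp).support.tail := by
      conv_lhs => rw [← hspec]
      exact Walk.support_append _ _
    have hnodup : ((p.takeUntil w hwp).support ++ (p.dropUntil w hwp).support.tail).Nodup := by
      rw [← hps]; exact hpath.support_nodup
    have hdisj := List.disjoint_of_nodup_append hnodup
    -- v not in takeUntil support
    have hvr : v ∈ (p.dropUntil w hwp).support.tail := by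
      have : v ∈ (p.dropUntil w hwp).support := Walk.end_mem_support _
      rw [(p.dropUntil w hwp).support_eq_cons] at this
      rcases List.mem_cons.1 this with h | h
      · exact absurd h.symm hwv
      · exact h
    have hvq : v ∉ (p.takeUntil w hwp).support := fun h => hdisj h hvr
    -- u not in dropUntil tail
    have huq : u ∈ (p.takeUntil w hwp).support := Walk.start_mem_support _
    have hur : u ∉ (p.dropUntil w hwp).support := by
      intro h
      rw [(p.dropUntil w hwp).support_eq_cons] at h
      rcases List.mem_cons.1 h with h | h
      · exact hwu h.symm
      · exact hdisj huq h
    constructor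
    · refine ⟨fun h => hwu h.symm, hu', hw', p.takeUntil w hwp, ?_⟩
      intro x hx hxu hxw hxS
      have hxp : x ∈ p.support := p.support_takeUntil_subset hwp hx
      have hxv : x ≠ v := fun h => hvq (h ▸ hx)
      rcases (hS x).1 hxS with h | h
      · exact hsup x hxp hxu hxv h
      · exact hxw h
    · refine ⟨hwv, hw', hv', p.dropUntil w hwp, ?_⟩
      intro x hx hxw hxv hxS
      have hxp : x ∈ p.support := p.support_dropUntil_subset hwp hx
      have hxu : x ≠ u := fun h => hur (h ▸ hx)
      rcases (hS x).1 hxS with h | h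
      · exact hsup x hxp hxu hxv h
      · exact hxw h
  · left
    refine ⟨hne, hu', hv', p, ?_⟩
    intro x hx hxu hxv hxS
    rcases (hS x).1 hxS with h | h
    · exact hsup x hx hxu hxv h
    · exact hwp (h ▸ hx)

lemma walk_lift {G : SimpleGraph V} {S' S A' : Set V} {w : V}
    (hw : w ∉ S') (hS : ∀ x, x ∈ S ↔ x ∈ S' ∨ x = w) :
    ∀ {a b : V} (p : (GStar G S').Walk a b), (∀ x ∈ p.support, x ∈ A') →
      ReachIn (GStar G S) (insert w A') a b := by
  intro a b p
  induction p with
  | nil =>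
    intro hp
    exact reachIn_refl (Set.mem_insert_of_mem _ (hp _ (Walk.start_mem_support _)))
  | @cons a x b h q ih =>
    intro hp
    have ha : a ∈ A' := hp _ (by simp)
    have hx : x ∈ A' := hp _ (by simp [Walk.start_mem_support])
    have hq : ∀ y ∈ q.support, y ∈ A' := fun y hy => hp y (by simp [hy])
    have hrest := ih hq
    rcases edge_split hw hS h with h' | ⟨h1, h2⟩
    · exact reachIn_trans (adj_reachIn h' (Set.mem_insert_of_mem _ ha)
        (Set.mem_insert_of_mem _ hx)) hrest
    · refine reachIn_trans (adj_reachIn h1 (Set.mem_insert_of_mem _ ha)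
        (Set.mem_insert _ _)) (reachIn_trans (adj_reachIn h2 (Set.mem_insert _ _)
        (Set.mem_insert_of_mem _ hx)) hrest)

lemma walk_lift2 {G : SimpleGraph V} {S' S A' : Set V} {w : V}
    (hw : w ∉ S') (hS : ∀ x, x ∈ S ↔ x ∈ S' ∨ x = w)
    (hno : ∀ z ∈ A', ¬ (GStar G S).Adj w z) :
    ∀ {a b : V} (p : (GStar G S').Walk a b), (∀ x ∈ p.support, x ∈ A') →
      ReachIn (GStar G S) A' a b := by
  intro a b p
  induction p with
  | nil =>
    intro hp
    exact reachIn_refl (hp _ (Walk.start_mem_support _))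
  | @cons a x b h q ih =>
    intro hp
    have ha : a ∈ A' := hp _ (by simp)
    have hx : x ∈ A' := hp _ (by simp [Walk.start_mem_support])
    have hq : ∀ y ∈ q.support, y ∈ A' := fun y hy => hp y (by simp [hy])
    rcases edge_split hw hS h with h' | ⟨h1, h2⟩
    · exact reachIn_trans (adj_reachIn h' ha hx) (ih hq)
    · exact absurd h1.symm (hno a ha)

end Stmt18Aux

open Stmt18Aux in
/-- With `V = Fin n`, `N_m` the first `m` vertices: if
`G*(N_{m−1}) \ U` is connected (for `U ⊆ N_{m−1}`), then at least one of
`G*(N_m) \ U` and `G*(N_m) \ (U ∪ {m})` is connected, where `m` denotes the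
last vertex of `N_m`. -/
theorem stmt_18 {n : ℕ} (G : SimpleGraph (Fin n)) (m : ℕ)
    (hm : 2 ≤ m) (hmn : m ≤ n)
    (U : Set (Fin n)) (hU : ∀ u ∈ U, (u : ℕ) < m - 1)
    (hconn : ConnOn (GStar G {i : Fin n | (i : ℕ) < m - 1})
      ({i : Fin n | (i : ℕ) < m - 1} \ U)) :
    ConnOn (GStar G {i : Fin n | (i : ℕ) < m})
      ({i : Fin n | (i : ℕ) < m} \ U) ∨
    ConnOn (GStar G {i : Fin n | (i : ℕ) < m})
      ({i : Fin n | (i : ℕ) < m} \ (U ∪ {(⟨m - 1, by omega⟩ : Fin n)})) := by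
  set S' : Set (Fin n) := {i : Fin n | (i : ℕ) < m - 1} with hS'def
  set S : Set (Fin n) := {i : Fin n | (i : ℕ) < m} with hSdef
  set w : Fin n := ⟨m - 1, by omega⟩ with hwdef
  set A' : Set (Fin n) := S' \ U with hA'def
  have hwS' : w ∉ S' := by simp [hS'def, hwdef]
  have hS : ∀ x : Fin n, x ∈ S ↔ x ∈ S' ∨ x = w := by
    intro x
    simp only [hSdef, hS'def, Set.mem_setOf_eq, hwdef, Fin.ext_iff]
    omega
  have hwU : w ∉ U := fun h => by have := hU w h; simp [hwdef] at this
  obtain ⟨hA'ne, hconn'⟩ := hconn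
  by_cases hc : ∃ z ∈ A', (GStar G S).Adj w z
  · left
    have hA : S \ U = insert w A' := by
      ext i
      simp only [Set.mem_diff, hS i, Set.mem_insert_iff, hA'def]
      constructor
      · rintro ⟨hi | rfl, hiU⟩
        · exact Or.inr ⟨hi, hiU⟩
        · exact Or.inl rfl
      · rintro (rfl | ⟨hi, hiU⟩)
        · exact ⟨Or.inr rfl, hwU⟩
        · exact ⟨Or.inl hi, hiU⟩
    rw [hA]
    obtain ⟨z, hz, hadj⟩ := hc
    have key : ∀ a ∈ insert w A', ReachIn (GStar G S) (insert w A') a z := by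
      rintro a (rfl | ha)
      · exact adj_reachIn hadj (Set.mem_insert _ _) (Set.mem_insert_of_mem _ hz)
      · obtain ⟨p, hp⟩ := hconn' a ha z hz
        exact walk_lift hwS' hS p hp
    refine ⟨⟨w, Set.mem_insert _ _⟩, fun a ha b hb => ?_⟩
    exact reachIn_trans (key a ha) (reachIn_symm (key b hb))
  · right
    push_neg at hc
    have hB : S \ (U ∪ {w}) = A' := by
      ext i
      simp only [Set.mem_diff, hS i, Set.mem_union, Set.mem_singleton_iff, hA'def, not_or]
      constructor
      · rintro ⟨hi | rfl, hiU, hiw⟩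
        · exact ⟨hi, hiU⟩
        · exact absurd rfl hiw
      · rintro ⟨hi, hiU⟩
        exact ⟨Or.inl hi, hiU, fun h => hwS' (h ▸ hi)⟩
    rw [hB]
    refine ⟨hA'ne, fun a ha b hb => ?_⟩
    obtain ⟨p, hp⟩ := hconn' a ha b hb
    exact walk_lift2 hwS' hS hc p hp
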